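/- Let X be a Banach space and Θ : ℝ → X Bochner integrable and uniformly continuous, with minimal modulus of continuity ω(s) = sup{‖Θ(η₁) − Θ(η₂)‖ : |η₁ − η₂| ≤ s}. Assume ∫_{|η| > r} ‖Θ(η)‖ dη ≤ D r^{-β} for all r > 1, for some D > 0 and β > 0. Then for every t ≥ 1 and every R > 2π, ‖∫_ℝ e^{iηt} Θ(η) dη‖ ≤ R · ω(π/t) + 2^β D R^{-β}. -/

import Mathlib

open MeasureTheory

theorem stmt11 {X : Type*} [NormedAddCommGroup X] [NormedSpace ℂ X] [CompleteSpace X]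
    (Θ : ℝ → X) (hΘ : Integrable Θ) (hUC : UniformContinuous Θ)
    (ω : ℝ → ℝ)
    (hω : ∀ s, 0 ≤ s → ∀ η₁ η₂ : ℝ, |η₁ - η₂| ≤ s → ‖Θ η₁ - Θ η₂‖ ≤ ω s)
    (D β : ℝ) (hD : 0 < D) (hβ : 0 < β)
    (htail : ∀ r : ℝ, 1 < r → ∫ η in {η : ℝ | r < |η|}, ‖Θ η‖ ≤ D * r ^ (-β))
    (t R : ℝ) (ht : 1 ≤ t) (hR : 2 * Real.pi < R) :
    ‖∫ η : ℝ, Complex.exp (Complex.I * (η : ℂ) * (t : ℂ)) • Θ η‖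
      ≤ R * ω (Real.pi / t) + (2 : ℝ) ^ β * D * R ^ (-β) := by
  have hπ : (0:ℝ) < Real.pi := Real.pi_pos
  have ht0 : (0:ℝ) < t := lt_of_lt_of_le one_pos ht
  set s : ℝ := Real.pi / t with hs_def
  have hs0 : 0 < s := div_pos hπ ht0
  have hsπ : s ≤ Real.pi := by
    rw [hs_def, div_le_iff₀ ht0]
    nlinarith
  have hR0 : (0:ℝ) < R := lt_trans (by positivity) hR
  have hR1 : (1:ℝ) < R := by nlinarith [Real.pi_gt_three]
  set c : ℝ → ℂ := fun η => Complex.exp (Complex.I * (η : ℂ) * (t : ℂ)) with hc_def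
  have hcnorm : ∀ η : ℝ, ‖c η‖ = 1 := by
    intro η
    simp only [hc_def, Complex.norm_exp]
    have : (Complex.I * (η : ℂ) * (t : ℂ)).re = 0 := by simp
    rw [this, Real.exp_zero]
  -- continuity / measurability of c
  have hc_cont : Continuous c := by
    apply Complex.continuous_exp.comp
    continuity
  have hΘs : Integrable (fun η => Θ (η + s)) := by
    exact ((measurePreserving_add_right volume s).integrable_comp_emb
      (MeasurableEquiv.addRight s).measurableEmbedding).mpr hΘ
  have hI1 : Integrable (fun η => c η • Θ η) := by
    refine Integrable.mono' hΘ.norm ((hc_cont.aestronglyMeasurable).smul hΘ.1) ?_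
    filter_upwards with η
    rw [norm_smul, hcnorm, one_mul]
  have hI2 : Integrable (fun η => c η • Θ (η + s)) := by
    refine Integrable.mono' hΘs.norm ((hc_cont.aestronglyMeasurable).smul hΘs.1) ?_
    filter_upwards with η
    rw [norm_smul, hcnorm, one_mul]
  set I : X := ∫ η : ℝ, c η • Θ η with hI_def
  have hst : (s : ℂ) * (t : ℂ) = (Real.pi : ℂ) := by
    rw [hs_def]
    push_cast
    rw [div_mul_cancel₀]
    exact Complex.ofReal_ne_zero.mpr ht0.ne'
  have hshift : ∫ η : ℝ, c η • Θ (η + s) = -I := by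
    have key : ∀ η : ℝ, c (η + s) • Θ (η + s) = -(c η • Θ (η + s)) := by
      intro η
      have : c (η + s) = - c η := by
        simp only [hc_def]
        push_cast
        rw [mul_add, add_mul, Complex.exp_add]
        have : Complex.I * (s:ℂ) * (t:ℂ) = (Real.pi : ℂ) * Complex.I := by
          rw [mul_assoc, hst]; ring
        rw [this, Complex.exp_pi_mul_I]
        ring
      rw [this, neg_smul]
    have := integral_add_right_eq_self (μ := volume) (fun η : ℝ => c η • Θ η) s
    calc ∫ η : ℝ, c η • Θ (η + s) = -∫ η : ℝ, c (η + s) • Θ (η + s) := by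
          simp_rw [key]; rw [integral_neg, neg_neg]
      _ = -I := by rw [this]
  have h2I : (2:ℝ) • I = ∫ η : ℝ, c η • (Θ η - Θ (η + s)) := by
    have : (2:ℝ) • I = I - (-I) := by
      rw [sub_neg_eq_add, two_smul]
    rw [this, ← hshift, hI_def, ← integral_sub hI1 hI2]
    congr 1
    funext η
    rw [smul_sub]
  set g : ℝ → ℝ := fun η => ‖Θ η - Θ (η + s)‖ with hg_def
  have hg_int : Integrable g := (hΘ.sub hΘs).norm
  have h2norm : 2 * ‖I‖ ≤ ∫ η : ℝ, g η := by
    have h1 : ‖(2:ℝ) • I‖ = 2 * ‖I‖ := by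
      rw [norm_smul]; simp
    rw [← h1, h2I]
    refine le_trans (norm_integral_le_integral_norm _) ?_
    refine le_of_eq (integral_congr_ae ?_)
    filter_upwards with η
    rw [norm_smul, hcnorm, one_mul]
  -- split the integral
  set A : Set ℝ := {η : ℝ | |η| ≤ R} with hA_def
  have hA_meas : MeasurableSet A := by
    have : A = Set.Icc (-R) R := by
      ext η; simp [hA_def, abs_le]
    rw [this]; exact measurableSet_Icc
  have hAc : Aᶜ = {η : ℝ | R < |η|} := by
    ext η; simp [hA_def, not_le]
  have hsplit : ∫ η : ℝ, g η = (∫ η in A, g η) + ∫ η in Aᶜ, g η :=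
    (integral_add_compl hA_meas hg_int).symm
  -- inner bound
  have hωs : ∀ η : ℝ, g η ≤ ω s := by
    intro η
    apply hω s hs0.le
    simp [abs_of_nonneg hs0.le]
  have hω0 : 0 ≤ ω s := le_trans (norm_nonneg _) (hωs 0)
  have hvolA : (volume A).toReal = 2 * R := by
    have : A = Set.Icc (-R) R := by
      ext η; simp [hA_def, abs_le]
    rw [this, Real.volume_Icc, ENNReal.toReal_ofReal (by linarith)]
    ring
  have hinner : ∫ η in A, g η ≤ 2 * R * ω s := by
    calc ∫ η in A, g η ≤ ∫ η in A, ω s := by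
          refine setIntegral_mono_on hg_int.integrableOn ((integrableOn_const_iff).mpr ?_)
            hA_meas (fun η _ => hωs η)
          right
          rw [show A = Set.Icc (-R) R by ext η; simp [hA_def, abs_le], Real.volume_Icc]
          exact ENNReal.ofReal_lt_top
      _ = (volume A).toReal * ω s := by rw [setIntegral_const, smul_eq_mul, measureReal_def]
      _ = 2 * R * ω s := by rw [hvolA]
  -- outer bound
  have houter1 : ∫ η in Aᶜ, ‖Θ η‖ ≤ D * R ^ (-β) := by
    rw [hAc]; exact htail R hR1
  have hhalf : (1:ℝ) < R / 2 := by nlinarith [Real.pi_gt_three]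
  have houter2 : ∫ η in Aᶜ, ‖Θ (η + s)‖ ≤ D * (R/2) ^ (-β) := by
    set B : Set ℝ := {y : ℝ | R < |y - s|} with hB_def
    have hB_meas : MeasurableSet B := by
      apply measurableSet_lt measurable_const
      exact (measurable_id.sub_const s).abs
    have hpre : (fun x => x + s) ⁻¹' B = Aᶜ := by
      ext η; simp [hB_def, hAc]
    have heq : ∫ η in Aᶜ, ‖Θ (η + s)‖ = ∫ y in B, ‖Θ y‖ := by
      rw [← hpre]
      exact (measurePreserving_add_right volume s).setIntegral_preimage_emb
        (MeasurableEquiv.addRight s).measurableEmbedding (fun y => ‖Θ y‖) B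
    have hsub : B ⊆ {y : ℝ | R / 2 < |y|} := by
      intro y hy
      simp only [hB_def, Set.mem_setOf_eq] at hy ⊢
      have h1 : |y - s| ≤ |y| + |s| := abs_sub y s
      rw [abs_of_nonneg hs0.le] at h1
      linarith
    rw [heq]
    calc ∫ y in B, ‖Θ y‖ ≤ ∫ y in {y : ℝ | R/2 < |y|}, ‖Θ y‖ := by
          refine setIntegral_mono_set hΘ.norm.integrableOn ?_ (HasSubset.Subset.eventuallyLE hsub)
          filter_upwards with y using norm_nonneg _
      _ ≤ D * (R/2) ^ (-β) := htail (R/2) hhalf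
  have houter : ∫ η in Aᶜ, g η ≤ D * R ^ (-β) + D * (R/2) ^ (-β) := by
    calc ∫ η in Aᶜ, g η ≤ ∫ η in Aᶜ, (‖Θ η‖ + ‖Θ (η + s)‖) := by
          refine setIntegral_mono hg_int.integrableOn
            (hΘ.norm.integrableOn.add hΘs.norm.integrableOn) ?_
          intro η
          exact norm_sub_le _ _
      _ = (∫ η in Aᶜ, ‖Θ η‖) + ∫ η in Aᶜ, ‖Θ (η + s)‖ :=
          integral_add hΘ.norm.integrableOn hΘs.norm.integrableOn
      _ ≤ D * R ^ (-β) + D * (R/2) ^ (-β) := add_le_add houter1 houter2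
  have hrpow : (R/2:ℝ) ^ (-β) = 2 ^ β * R ^ (-β) := by
    rw [div_eq_mul_inv, Real.mul_rpow hR0.le (by norm_num), Real.inv_rpow (by norm_num),
      ← Real.rpow_neg (by norm_num), neg_neg]
    ring
  have hmono : R ^ (-β) ≤ 2 ^ β * R ^ (-β) := by
    have h1 : (1:ℝ) ≤ 2 ^ β := Real.one_le_rpow (by norm_num) hβ.le
    have h2 : (0:ℝ) ≤ R ^ (-β) := Real.rpow_nonneg hR0.le _
    nlinarith
  have final : 2 * ‖I‖ ≤ 2 * (R * ω s) + 2 * ((2:ℝ) ^ β * D * R ^ (-β)) := by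
    calc 2 * ‖I‖ ≤ ∫ η : ℝ, g η := h2norm
      _ = (∫ η in A, g η) + ∫ η in Aᶜ, g η := hsplit
      _ ≤ 2 * R * ω s + (D * R ^ (-β) + D * (R/2) ^ (-β)) := add_le_add hinner houter
      _ ≤ 2 * (R * ω s) + 2 * ((2:ℝ) ^ β * D * R ^ (-β)) := by
          rw [hrpow]
          have := hmono
          nlinarith
  show ‖I‖ ≤ R * ω s + (2:ℝ) ^ β * D * R ^ (-β)
  linarith
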